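/- If a 2-dimensional sphere of radius r > 1/2 in ℝ³ is colored with finitely many colors such that no two points at Euclidean distance 1 receive the same color, then at least 3 colors are used. -/

import Mathlib

open Real

noncomputable def pt3 (a b c : ℝ) : EuclideanSpace ℝ (Fin 3) := WithLp.toLp 2 ![a, b, c]

lemma pt3_0 (a b c : ℝ) : pt3 a b c 0 = a := rfl
lemma pt3_1 (a b c : ℝ) : pt3 a b c 1 = b := rfl
lemma pt3_2 (a b c : ℝ) : pt3 a b c 2 = c := rfl

lemma dist3 (x y : EuclideanSpace ℝ (Fin 3)) :
    dist x y = Real.sqrt ((x 0 - y 0)^2 + ((x 1 - y 1)^2 + (x 2 - y 2)^2)) := by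
  rw [EuclideanSpace.dist_eq, Fin.sum_univ_three]
  simp [Real.dist_eq, sq_abs, add_assoc]

lemma zero3 (i : Fin 3) : (0 : EuclideanSpace ℝ (Fin 3)) i = 0 := rfl

noncomputable def Ppt (r δ : ℝ) (i : ℕ) : EuclideanSpace ℝ (Fin 3) :=
  pt3 (r * Real.cos (i*δ)) (r * Real.sin (i*δ)) 0

noncomputable def Qpt (r u s δ : ℝ) (i : ℕ) : EuclideanSpace ℝ (Fin 3) :=
  pt3 (r*u * Real.cos ((i+1/2)*δ)) (r*u * Real.sin ((i+1/2)*δ)) (r*s)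

lemma Pmem (r δ : ℝ) (hr0 : 0 ≤ r) (i : ℕ) :
    Ppt r δ i ∈ Metric.sphere (0 : EuclideanSpace ℝ (Fin 3)) r := by
  rw [Metric.mem_sphere, dist3]
  simp only [Ppt, pt3_0, pt3_1, pt3_2, zero3]
  rw [show (r * Real.cos (i*δ) - 0)^2 + ((r * Real.sin (i*δ) - 0)^2 + ((0:ℝ) - 0)^2)
      = r^2 from by linear_combination r^2 * (Real.sin_sq_add_cos_sq ((i:ℝ)*δ))]
  exact Real.sqrt_sq hr0

lemma Qmem (r u s δ : ℝ) (hr0 : 0 ≤ r) (hs : s^2 = 1 - u^2) (i : ℕ) :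
    Qpt r u s δ i ∈ Metric.sphere (0 : EuclideanSpace ℝ (Fin 3)) r := by
  rw [Metric.mem_sphere, dist3]
  simp only [Qpt, pt3_0, pt3_1, pt3_2, zero3]
  rw [show (r*u * Real.cos ((i+1/2)*δ) - 0)^2 +
      ((r*u * Real.sin ((i+1/2)*δ) - 0)^2 + ((r*s) - 0)^2) = r^2 from by
    linear_combination r^2*u^2 * (Real.sin_sq_add_cos_sq (((i:ℝ)+1/2)*δ)) + r^2 * hs]
  exact Real.sqrt_sq hr0

lemma key1 (r u s t ca sa cb sb cd : ℝ) (h1 : sa^2 + ca^2 = 1) (h2 : sb^2 + cb^2 = 1)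
    (hs : s^2 = 1 - u^2) (hd : cb*ca + sb*sa = cd) (hu : u*cd = t)
    (ht : 2*r^2*t = 2*r^2 - 1) :
    (r*ca - r*u*cb)^2 + ((r*sa - r*u*sb)^2 + (0 - r*s)^2) = 1 := by
  linear_combination r^2*h1 + r^2*u^2*h2 + r^2*hs + (-2*r^2*u)*hd + (-2*r^2)*hu + (-1)*ht

lemma distPQ (r u s t δ : ℝ) (hs : s^2 = 1 - u^2) (hu : u * Real.cos (δ/2) = t)
    (ht : 2*r^2*t = 2*r^2 - 1) (i : ℕ) :
    dist (Ppt r δ i) (Qpt r u s δ i) = 1 := by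
  rw [dist3]
  simp only [Ppt, Qpt, pt3_0, pt3_1, pt3_2]
  have hd : Real.cos (((i:ℝ)+1/2)*δ) * Real.cos ((i:ℝ)*δ) +
      Real.sin (((i:ℝ)+1/2)*δ) * Real.sin ((i:ℝ)*δ) = Real.cos (δ/2) := by
    rw [← Real.cos_sub]; congr 1; ring
  rw [key1 r u s t _ _ _ _ _ (Real.sin_sq_add_cos_sq _) (Real.sin_sq_add_cos_sq _) hs hd hu ht]
  exact Real.sqrt_one

lemma distQP (r u s t δ : ℝ) (hs : s^2 = 1 - u^2) (hu : u * Real.cos (δ/2) = t)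
    (ht : 2*r^2*t = 2*r^2 - 1) (i : ℕ) :
    dist (Qpt r u s δ i) (Ppt r δ (i+1)) = 1 := by
  rw [dist_comm, dist3]
  simp only [Ppt, Qpt, pt3_0, pt3_1, pt3_2]
  have hd : Real.cos (((i:ℝ)+1/2)*δ) * Real.cos (((i+1:ℕ):ℝ)*δ) +
      Real.sin (((i:ℝ)+1/2)*δ) * Real.sin (((i+1:ℕ):ℝ)*δ) = Real.cos (δ/2) := by
    rw [← Real.cos_sub,
      show (((i:ℝ)+1/2)*δ - ((i+1:ℕ):ℝ)*δ) = -(δ/2) from by push_cast; ring,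
      Real.cos_neg]
  rw [key1 r u s t _ _ _ _ _ (Real.sin_sq_add_cos_sq _) (Real.sin_sq_add_cos_sq _) hs hd hu ht]
  exact Real.sqrt_one

lemma distP0 (r t δ : ℝ) (m : ℕ) (hA : Real.cos ((m:ℝ)*δ) = t)
    (ht : 2*r^2*t = 2*r^2 - 1) :
    dist (Ppt r δ m) (Ppt r δ 0) = 1 := by
  rw [dist3]
  simp only [Ppt, pt3_0, pt3_1, pt3_2]
  rw [show (((0:ℕ):ℝ))*δ = 0 from by norm_num, Real.cos_zero, Real.sin_zero]
  rw [show (r * Real.cos ((m:ℝ)*δ) - r*1)^2 +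
      ((r * Real.sin ((m:ℝ)*δ) - r*0)^2 + ((0:ℝ) - 0)^2) = 1 from by
    linear_combination r^2 * (Real.sin_sq_add_cos_sq ((m:ℝ)*δ)) - 2*r^2*hA - ht]
  exact Real.sqrt_one

theorem stmt_0 (r : ℝ) (hr : 1/2 < r) (n : ℕ)
    (c : EuclideanSpace ℝ (Fin 3) → Fin n)
    (hc : ∀ x ∈ Metric.sphere (0 : EuclideanSpace ℝ (Fin 3)) r,
          ∀ y ∈ Metric.sphere (0 : EuclideanSpace ℝ (Fin 3)) r,
          dist x y = 1 → c x ≠ c y) :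
    ∃ x ∈ Metric.sphere (0 : EuclideanSpace ℝ (Fin 3)) r,
    ∃ y ∈ Metric.sphere (0 : EuclideanSpace ℝ (Fin 3)) r,
    ∃ z ∈ Metric.sphere (0 : EuclideanSpace ℝ (Fin 3)) r,
      c x ≠ c y ∧ c y ≠ c z ∧ c x ≠ c z := by
  by_contra hcon
  push_neg at hcon
  have hr0 : (0:ℝ) < r := by linarith
  have hπ := Real.pi_pos
  set t : ℝ := 1 - 1/(2*r^2) with ht_def
  have hr2 : (0:ℝ) < 2*r^2 := by positivity
  have ht1 : -1 < t := by
    have h : 1/(2*r^2) < 2 := by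
      rw [div_lt_iff₀ hr2]; nlinarith
    rw [ht_def]; linarith
  have ht2 : t < 1 := by
    have : 0 < 1/(2*r^2) := by positivity
    rw [ht_def]; linarith
  have htr : 2*r^2*t = 2*r^2 - 1 := by
    rw [ht_def]; field_simp
  set θ : ℝ := Real.arccos t with hθ_def
  have hθ0 : 0 < θ := Real.arccos_pos.2 ht2
  have hcosθ : Real.cos θ = t := Real.cos_arccos ht1.le ht2.le
  have hθπ : θ < π := by
    rcases lt_or_eq_of_le (Real.arccos_le_pi t) with h | h
    · exact h
    · exfalso
      rw [hθ_def, h, Real.cos_pi] at hcosθ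
      linarith
  set μ : ℝ := min (2*θ) (2*π - 2*θ) with hμ_def
  have hμ0 : 0 < μ := lt_min (by linarith) (by linarith)
  have hμθ : μ ≤ 2*θ := min_le_left _ _
  have hμθ' : μ ≤ 2*π - 2*θ := min_le_right _ _
  have hμπ : μ ≤ π := by
    rcases le_total θ (π/2) with h | h
    · linarith
    · linarith
  set m : ℕ := ⌈(2*π - θ)/(μ/2)⌉₊ with hm_def
  have hnum : 0 < 2*π - θ := by linarith
  have hm0 : 0 < m := Nat.ceil_pos.2 (div_pos hnum (by linarith))
  have hmR : (0:ℝ) < (m:ℝ) := by exact_mod_cast hm0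
  set δ : ℝ := (2*π - θ)/m with hδ_def
  have hδ0 : 0 < δ := div_pos hnum hmR
  have hδμ : δ ≤ μ/2 := by
    have hle := Nat.le_ceil ((2*π - θ)/(μ/2))
    rw [div_le_iff₀ (by linarith : (0:ℝ) < μ/2)] at hle
    rw [← hm_def] at hle
    rw [hδ_def, div_le_iff₀ hmR]
    nlinarith
  have hmδ : (m:ℝ) * δ = 2*π - θ := by
    rw [hδ_def, mul_div_cancel₀ _ (ne_of_gt hmR)]
  have hδhalf : δ/2 < π/2 := by
    have : δ ≤ π/2 := le_trans hδμ (by linarith)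
    linarith
  have hcospos : 0 < Real.cos (δ/2) :=
    Real.cos_pos_of_mem_Ioo ⟨by linarith, hδhalf⟩
  have hcost1 : t ≤ Real.cos (δ/2) := by
    have h := Real.cos_le_cos_of_nonneg_of_le_pi (by linarith : (0:ℝ) ≤ δ/2)
      hθπ.le (by linarith : δ/2 ≤ θ)
    rw [hcosθ] at h
    linarith
  have hcost2 : -t ≤ Real.cos (δ/2) := by
    have h := Real.cos_le_cos_of_nonneg_of_le_pi (by linarith : (0:ℝ) ≤ δ/2)
      (by linarith : π - θ ≤ π) (by linarith : δ/2 ≤ π - θ)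
    rw [Real.cos_pi_sub, hcosθ] at h
    linarith
  set u : ℝ := t / Real.cos (δ/2) with hu_def
  have hucos : u * Real.cos (δ/2) = t := div_mul_cancel₀ _ (ne_of_gt hcospos)
  have hu2 : u^2 ≤ 1 := by
    rw [hu_def, div_pow, div_le_one (by positivity)]
    nlinarith
  set s : ℝ := Real.sqrt (1 - u^2) with hs_def
  have hs : s^2 = 1 - u^2 := Real.sq_sqrt (by linarith)
  -- the odd cycle
  have hPmem := Pmem r δ hr0.le
  have hQmem := Qmem r u s δ hr0.le hs
  have e1 : ∀ i, c (Ppt r δ i) ≠ c (Qpt r u s δ i) :=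
    fun i => hc _ (hPmem i) _ (hQmem i) (distPQ r u s t δ hs hucos htr i)
  have e2 : ∀ i, c (Qpt r u s δ i) ≠ c (Ppt r δ (i+1)) :=
    fun i => hc _ (hQmem i) _ (hPmem (i+1)) (distQP r u s t δ hs hucos htr i)
  have chain : ∀ i, c (Ppt r δ i) = c (Ppt r δ 0) ∧ c (Qpt r u s δ i) = c (Qpt r u s δ 0) := by
    intro i
    induction i with
    | zero => exact ⟨rfl, rfl⟩
    | succ i ih =>
      obtain ⟨hPi, hQi⟩ := ih
      have hP1 : c (Ppt r δ (i+1)) = c (Ppt r δ 0) := by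
        have h := hcon (Ppt r δ 0) (hPmem 0) (Qpt r u s δ i) (hQmem i)
          (Ppt r δ (i+1)) (hPmem (i+1))
          (by rw [← hPi]; exact e1 i) (e2 i)
        exact h.symm
      refine ⟨hP1, ?_⟩
      have h := hcon (Qpt r u s δ 0) (hQmem 0) (Ppt r δ (i+1)) (hPmem (i+1))
        (Qpt r u s δ (i+1)) (hQmem (i+1))
        (by rw [← hQi]; exact e2 i) (e1 (i+1))
      exact h.symm
  have hA : Real.cos ((m:ℝ)*δ) = t := by
    rw [hmδ, show 2*π - θ = 2*π + (-θ) from by ring, Real.cos_add,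
      Real.cos_two_pi, Real.sin_two_pi, Real.cos_neg, hcosθ]
    ring
  have hlast : c (Ppt r δ m) ≠ c (Ppt r δ 0) :=
    hc _ (hPmem m) _ (hPmem 0) (distP0 r t δ m hA htr)
  exact hlast (chain m).1
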